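/- Let G be a countable group, n ≥ 1 and m ∈ ℕ. The function Ψ : ℓ²(G,ℝ)^{⊕n} → ℝ defined by Ψ(ξ) = ∏_{l=1}^n ∏_{g∈G} D_m(ξ(l)(g)) (an unconditionally convergent product) is continuous with respect to the ℓ² norm topology. -/

import Mathlib

open scoped ENNReal

noncomputable section

/-- The normalized Dirichlet kernel `D_m(t) = (2m+1)⁻¹ ∑_{j=-m}^{m} cos(2πjt)`. -/
def Dm (m : ℕ) (t : ℝ) : ℝ :=
  (2 * (m : ℝ) + 1)⁻¹ * ∑ j ∈ Finset.Icc (-(m : ℤ)) (m : ℤ), Real.cos (2 * Real.pi * (j : ℝ) * t)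

namespace DirAux

open Real Filter

lemma cos_diff_bound (x y : ℝ) : |Real.cos x - Real.cos y| ≤ (|x| + |y|) / 2 * |x - y| := by
  rw [Real.cos_sub_cos, abs_mul, abs_mul]
  have h1 : |Real.sin ((x + y) / 2)| ≤ |x + y| / 2 := by
    simpa [abs_div] using Real.abs_sin_le_abs (x := (x + y) / 2)
  have h2 : |Real.sin ((x - y) / 2)| ≤ |x - y| / 2 := by
    simpa [abs_div] using Real.abs_sin_le_abs (x := (x - y) / 2)
  have h3 : |x + y| ≤ |x| + |y| := abs_add_le x y
  have h4 : (0:ℝ) ≤ |Real.sin ((x - y)/2)| := abs_nonneg _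
  have h5 : (0:ℝ) ≤ |Real.sin ((x + y)/2)| := abs_nonneg _
  have h6 : |(-2 : ℝ)| = 2 := by norm_num
  rw [h6]
  nlinarith [abs_nonneg (x - y), abs_nonneg (x + y)]

lemma dm_zero (m : ℕ) : Dm m 0 = 1 := by
  have hcard : (Finset.Icc (-(m : ℤ)) (m : ℤ)).card = 2 * m + 1 := by
    rw [Int.card_Icc]; omega
  simp only [Dm, mul_zero, Real.cos_zero, Finset.sum_const, hcard, nsmul_eq_mul]
  push_cast
  rw [mul_one, inv_mul_cancel₀ (by positivity : (2*(m:ℝ)+1) ≠ 0)]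

lemma dm_abs_le_one (m : ℕ) (t : ℝ) : |Dm m t| ≤ 1 := by
  have hcard : (Finset.Icc (-(m : ℤ)) (m : ℤ)).card = 2 * m + 1 := by
    rw [Int.card_Icc]; omega
  have h0 : (0:ℝ) < 2 * (m:ℝ) + 1 := by positivity
  rw [Dm, abs_mul, abs_of_nonneg (inv_nonneg.2 h0.le)]
  have hsum : |∑ j ∈ Finset.Icc (-(m : ℤ)) (m : ℤ), Real.cos (2 * Real.pi * (j : ℝ) * t)|
      ≤ 2 * (m:ℝ) + 1 := by
    calc |∑ j ∈ Finset.Icc (-(m : ℤ)) (m : ℤ), Real.cos (2 * Real.pi * (j : ℝ) * t)|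
        ≤ ∑ j ∈ Finset.Icc (-(m : ℤ)) (m : ℤ), |Real.cos (2 * Real.pi * (j : ℝ) * t)| :=
          Finset.abs_sum_le_sum_abs _ _
      _ ≤ ∑ j ∈ Finset.Icc (-(m : ℤ)) (m : ℤ), 1 :=
          Finset.sum_le_sum fun j _ => Real.abs_cos_le_one _
      _ = 2 * (m:ℝ) + 1 := by rw [Finset.sum_const, hcard]; push_cast; ring
  calc (2 * (m:ℝ) + 1)⁻¹ * |_| ≤ (2 * (m:ℝ) + 1)⁻¹ * (2 * (m:ℝ) + 1) := by
        exact mul_le_mul_of_nonneg_left hsum (inv_nonneg.2 h0.le)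
    _ = 1 := inv_mul_cancel₀ h0.ne'

lemma dm_diff (m : ℕ) (s t : ℝ) :
    |Dm m s - Dm m t| ≤ 2 * Real.pi ^ 2 * (m:ℝ) ^ 2 * ((|s| + |t|) * |s - t|) := by
  have hπ := Real.pi_pos
  have hcard : (Finset.Icc (-(m : ℤ)) (m : ℤ)).card = 2 * m + 1 := by
    rw [Int.card_Icc]; omega
  have h0 : (0:ℝ) < 2 * (m:ℝ) + 1 := by positivity
  have hterm : ∀ j ∈ Finset.Icc (-(m : ℤ)) (m : ℤ),
      |Real.cos (2 * Real.pi * (j : ℝ) * s) - Real.cos (2 * Real.pi * (j : ℝ) * t)|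
        ≤ 2 * Real.pi ^ 2 * (m:ℝ) ^ 2 * ((|s| + |t|) * |s - t|) := by
    intro j hj
    have hjm : |(j:ℝ)| ≤ (m:ℝ) := by
      rw [Finset.mem_Icc] at hj
      have : |j| ≤ (m:ℤ) := abs_le.2 hj
      exact_mod_cast (by exact_mod_cast this : |(j:ℤ)| ≤ (m:ℤ))
    have hb := cos_diff_bound (2 * Real.pi * (j : ℝ) * s) (2 * Real.pi * (j : ℝ) * t)
    have habs : ∀ u : ℝ, |2 * Real.pi * (j : ℝ) * u| = 2 * Real.pi * |(j:ℝ)| * |u| := by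
      intro u
      rw [abs_mul, abs_mul, abs_mul]
      simp [abs_of_pos hπ]
    have hsub : |2 * Real.pi * (j : ℝ) * s - 2 * Real.pi * (j : ℝ) * t|
        = 2 * Real.pi * |(j:ℝ)| * |s - t| := by
      rw [← mul_sub]; exact habs (s - t)
    rw [habs s, habs t, hsub] at hb
    refine hb.trans ?_
    have heq : (2 * Real.pi * |(j:ℝ)| * |s| + 2 * Real.pi * |(j:ℝ)| * |t|) / 2 *
        (2 * Real.pi * |(j:ℝ)| * |s - t|)
        = 2 * Real.pi ^ 2 * |(j:ℝ)| ^ 2 * ((|s| + |t|) * |s - t|) := by ring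
    rw [heq]
    gcongr
  have hsum : |∑ j ∈ Finset.Icc (-(m : ℤ)) (m : ℤ),
        (Real.cos (2 * Real.pi * (j : ℝ) * s) - Real.cos (2 * Real.pi * (j : ℝ) * t))|
      ≤ (2 * (m:ℝ) + 1) * (2 * Real.pi ^ 2 * (m:ℝ) ^ 2 * ((|s| + |t|) * |s - t|)) := by
    calc |∑ j ∈ Finset.Icc (-(m : ℤ)) (m : ℤ),
          (Real.cos (2 * Real.pi * (j : ℝ) * s) - Real.cos (2 * Real.pi * (j : ℝ) * t))|
        ≤ ∑ j ∈ Finset.Icc (-(m : ℤ)) (m : ℤ),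
          |Real.cos (2 * Real.pi * (j : ℝ) * s) - Real.cos (2 * Real.pi * (j : ℝ) * t)| :=
          Finset.abs_sum_le_sum_abs _ _
      _ ≤ ∑ _j ∈ Finset.Icc (-(m : ℤ)) (m : ℤ),
            (2 * Real.pi ^ 2 * (m:ℝ) ^ 2 * ((|s| + |t|) * |s - t|)) :=
          Finset.sum_le_sum hterm
      _ = (2 * (m:ℝ) + 1) * (2 * Real.pi ^ 2 * (m:ℝ) ^ 2 * ((|s| + |t|) * |s - t|)) := by
          rw [Finset.sum_const, hcard]; push_cast; ring
  have heq2 : Dm m s - Dm m t = (2 * (m:ℝ) + 1)⁻¹ * ∑ j ∈ Finset.Icc (-(m : ℤ)) (m : ℤ),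
      (Real.cos (2 * Real.pi * (j : ℝ) * s) - Real.cos (2 * Real.pi * (j : ℝ) * t)) := by
    rw [Dm, Dm, ← mul_sub, Finset.sum_sub_distrib]
  rw [heq2, abs_mul, abs_of_nonneg (inv_nonneg.2 h0.le)]
  calc (2 * (m:ℝ) + 1)⁻¹ * |_| ≤ (2 * (m:ℝ) + 1)⁻¹ *
      ((2 * (m:ℝ) + 1) * (2 * Real.pi ^ 2 * (m:ℝ) ^ 2 * ((|s| + |t|) * |s - t|))) :=
        mul_le_mul_of_nonneg_left hsum (inv_nonneg.2 h0.le)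
    _ = 2 * Real.pi ^ 2 * (m:ℝ) ^ 2 * ((|s| + |t|) * |s - t|) := by
        rw [← mul_assoc, inv_mul_cancel₀ h0.ne', one_mul]

lemma abs_log_le {x : ℝ} (hx : 1/2 ≤ x) : |Real.log x| ≤ 2 * |1 - x| := by
  have hx0 : (0:ℝ) < x := by linarith
  rcases le_or_gt 1 x with h | h
  · rw [abs_of_nonneg (Real.log_nonneg h), abs_sub_comm, abs_of_nonneg (by linarith)]
    have := Real.log_le_sub_one_of_pos hx0
    linarith
  · rw [abs_of_nonpos (Real.log_nonpos hx0.le h.le), abs_of_nonneg (by linarith)]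
    have h2 : -Real.log x = Real.log x⁻¹ := (Real.log_inv x).symm
    have h3 : Real.log x⁻¹ ≤ x⁻¹ - 1 := Real.log_le_sub_one_of_pos (by positivity)
    have h4 : x * x⁻¹ = 1 := mul_inv_cancel₀ hx0.ne'
    nlinarith [mul_nonneg (by linarith : (0:ℝ) ≤ 2*x - 1) (by linarith : (0:ℝ) ≤ 1 - x)]

lemma amgm {a b e : ℝ} (he : 0 < e) : 2 * (a * b) ≤ e * a ^ 2 + e⁻¹ * b ^ 2 := by
  have h4 : e * e⁻¹ = 1 := mul_inv_cancel₀ he.ne'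
  nlinarith [sq_nonneg (e * a - b), mul_pos he he, sq_nonneg (a*e - b), he.le,
    mul_nonneg he.le (sq_nonneg (e*a - b))]

lemma multipliable_of_summable {ι : Type*} {a : ι → ℝ}
    (h : Summable fun p => |1 - a p|) : Multipliable a := by
  classical
  by_cases h0 : ∃ p, a p = 0
  · obtain ⟨p, hp⟩ := h0
    refine ⟨0, ?_⟩
    have hev : ∀ᶠ F : Finset ι in Filter.atTop, ∏ q ∈ F, a q = 0 := by
      filter_upwards [Filter.eventually_ge_atTop {p}] with F hF
      exact Finset.prod_eq_zero (hF (Finset.mem_singleton_self p)) hp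
    exact Filter.Tendsto.congr' (hev.mono fun F hF => hF.symm) tendsto_const_nhds
  push_neg at h0
  have h2 : ∀ᶠ p in Filter.cofinite, |1 - a p| < 1/2 :=
    h.tendsto_cofinite_zero.eventually (gt_mem_nhds (by norm_num))
  have hfin : {p | ¬ |1 - a p| < 1/2}.Finite := Filter.eventually_cofinite.mp h2
  set E := hfin.toFinset with hE
  set b : ι → ℝ := fun p => if p ∈ E then 1 else a p with hb
  set c : ι → ℝ := fun p => if p ∈ E then a p else 1 with hc
  have hbpos : ∀ p, 1/2 ≤ b p := by
    intro p
    by_cases hp : p ∈ E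
    · simp only [hb, if_pos hp]; norm_num
    · have hlt : |1 - a p| < 1/2 := by
        by_contra hcon
        exact hp (by simpa [hE] using hcon)
      have h' := abs_lt.1 hlt
      simp only [hb, if_neg hp]
      linarith [h'.1, h'.2]
  have hbabs : ∀ p, |1 - b p| ≤ |1 - a p| := by
    intro p
    by_cases hp : p ∈ E <;> simp [hb, hp, abs_nonneg]
  have hsum1 : Summable fun p => |1 - b p| :=
    h.of_nonneg_of_le (fun p => abs_nonneg _) hbabs
  have hsumlog : Summable fun p => Real.log (b p) := by
    refine Summable.of_abs (hsum1.mul_left 2 |>.of_nonneg_of_le (fun p => abs_nonneg _) ?_)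
    exact fun p => abs_log_le (hbpos p)
  have hbp : HasProd b (Real.exp (∑' p, Real.log (b p))) := by
    have := hsumlog.hasSum.rexp
    have heq : (Real.exp ∘ fun p => Real.log (b p)) = b :=
      funext fun p => Real.exp_log (lt_of_lt_of_le (by norm_num) (hbpos p))
    rwa [heq] at this
  have hcp : HasProd c (∏ p ∈ E, c p) :=
    hasProd_prod_of_ne_finset_one fun p hp => by simp [hc, hp]
  have key : (fun p => b p * c p) = a := by
    funext p
    by_cases hp : p ∈ E <;> simp [hb, hc, hp]
  exact ⟨_, key ▸ hbp.mul hcp⟩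

lemma prod_sub_prod_abs_le {ι : Type*} (F : Finset ι) (a b : ι → ℝ)
    (ha : ∀ p, |a p| ≤ 1) (hb : ∀ p, |b p| ≤ 1) :
    |∏ p ∈ F, a p - ∏ p ∈ F, b p| ≤ ∑ p ∈ F, |a p - b p| := by
  classical
  induction F using Finset.induction with
  | empty => simp
  | @insert x s hx ih =>
    rw [Finset.prod_insert hx, Finset.prod_insert hx, Finset.sum_insert hx]
    have hPb : |∏ p ∈ s, b p| ≤ 1 := by
      rw [Finset.abs_prod]
      exact Finset.prod_le_one (fun p _ => abs_nonneg _) (fun p _ => hb p)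
    have h1 : a x * ∏ p ∈ s, a p - b x * ∏ p ∈ s, b p
        = a x * (∏ p ∈ s, a p - ∏ p ∈ s, b p) + (a x - b x) * ∏ p ∈ s, b p := by ring
    rw [h1]
    calc |a x * (∏ p ∈ s, a p - ∏ p ∈ s, b p) + (a x - b x) * ∏ p ∈ s, b p|
        ≤ |a x * (∏ p ∈ s, a p - ∏ p ∈ s, b p)| + |(a x - b x) * ∏ p ∈ s, b p| :=
          abs_add_le (a x * (∏ p ∈ s, a p - ∏ p ∈ s, b p)) ((a x - b x) * ∏ p ∈ s, b p)
      _ = |a x| * |∏ p ∈ s, a p - ∏ p ∈ s, b p| + |a x - b x| * |∏ p ∈ s, b p| := by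
          rw [abs_mul, abs_mul]
      _ ≤ 1 * (∑ p ∈ s, |a p - b p|) + |a x - b x| * 1 := by
          refine add_le_add (mul_le_mul (ha x) ih (abs_nonneg _) zero_le_one)
            (mul_le_mul_of_nonneg_left hPb (abs_nonneg _))
      _ = |a x - b x| + ∑ p ∈ s, |a p - b p| := by ring

lemma abs_tprod_sub_tprod_le {ι : Type*} {a b : ι → ℝ} (hma : Multipliable a)
    (hmb : Multipliable b) (ha : ∀ p, |a p| ≤ 1) (hb : ∀ p, |b p| ≤ 1)
    (hs : Summable fun p => |a p - b p|) :
    |∏' p, a p - ∏' p, b p| ≤ ∑' p, |a p - b p| := by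
  have h1 : Filter.Tendsto (fun F : Finset ι => |∏ p ∈ F, a p - ∏ p ∈ F, b p|) Filter.atTop
      (nhds |∏' p, a p - ∏' p, b p|) := (hma.hasProd.sub hmb.hasProd).abs
  refine le_of_tendsto' h1 fun F => ?_
  exact (prod_sub_prod_abs_le F a b ha hb).trans
    (Summable.sum_le_tsum F (fun p _ => abs_nonneg _) hs)

lemma aux_ineq (C e u v : ℝ) (hC : 0 ≤ C) (he : 0 < e) :
    C * ((|v| + |u|) * |v - u|) ≤ C * (v - u) ^ 2 + C * (e * u ^ 2 + e⁻¹ * (v - u) ^ 2) := by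
  have h2 : |v| ≤ |u| + |v - u| := by
    simpa using abs_add_le u (v - u)
  have h3 := amgm (a := |u|) (b := |v - u|) he
  have hsa : |u| ^ 2 = u ^ 2 := sq_abs u
  have hsb : |v - u| ^ 2 = (v - u) ^ 2 := sq_abs _
  have key : (|v| + |u|) * |v - u| ≤ (v - u) ^ 2 + (e * u ^ 2 + e⁻¹ * (v - u) ^ 2) := by
    calc (|v| + |u|) * |v - u| ≤ (|u| + |v - u| + |u|) * |v - u| :=
          mul_le_mul_of_nonneg_right (by linarith) (abs_nonneg _)
      _ = |v - u| ^ 2 + 2 * (|u| * |v - u|) := by ring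
      _ ≤ (v - u) ^ 2 + (e * u ^ 2 + e⁻¹ * (v - u) ^ 2) := by
          rw [hsa, hsb] at h3
          rw [hsb]
          linarith
  calc C * ((|v| + |u|) * |v - u|)
      ≤ C * ((v - u) ^ 2 + (e * u ^ 2 + e⁻¹ * (v - u) ^ 2)) :=
        mul_le_mul_of_nonneg_left key hC
    _ = C * (v - u) ^ 2 + C * (e * u ^ 2 + e⁻¹ * (v - u) ^ 2) := by ring

variable {G : Type*} {n : ℕ}

lemma slice_summable (y : lp (fun _ : G => ℝ) 2) : Summable fun g => (y g) ^ 2 := by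
  have h := (lp.memℓp y).summable (p := 2) (by norm_num)
  refine h.congr fun g => ?_
  rw [ENNReal.toReal_ofNat, Real.rpow_two, Real.norm_eq_abs, sq_abs]

lemma sq_summable (x : PiLp 2 (fun _ : Fin n => lp (fun _ : G => ℝ) 2)) :
    Summable fun p : Fin n × G => (x p.1 p.2) ^ 2 :=
  (summable_prod_of_nonneg (fun _ => sq_nonneg _)).2
    ⟨fun l => slice_summable (x l), Summable.of_finite⟩

lemma tsum_sq_eq (x : PiLp 2 (fun _ : Fin n => lp (fun _ : G => ℝ) 2)) :
    ∑' p : Fin n × G, (x p.1 p.2) ^ 2 = ‖x‖ ^ 2 := by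
  rw [PiLp.norm_sq_eq_of_L2]
  rw [Summable.tsum_prod' (sq_summable x) (fun l => slice_summable (x l))]
  rw [tsum_fintype]
  refine Finset.sum_congr rfl fun l _ => ?_
  have h := lp.norm_rpow_eq_tsum (p := 2) (by norm_num) (x l)
  simp only [ENNReal.toReal_ofNat, Real.rpow_two, Real.norm_eq_abs, sq_abs] at h
  exact h.symm

end DirAux

set_option maxHeartbeats 1600000 in
/-- The function `Ψ : ℓ²(G,ℝ)^{⊕n} → ℝ`, `Ψ(ξ) = ∏_{l=1}^n ∏_{g∈G} D_m(ξ(l)(g))`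
(an unconditionally convergent product), is continuous in the ℓ² norm topology
(here `ℓ²(G,ℝ)^{⊕n}` carries the `PiLp 2` norm). -/
theorem dirichlet_product_continuous {G : Type*} [Group G] [Countable G] {n : ℕ}
    (hn : 1 ≤ n) (m : ℕ) :
    Continuous (fun ξ : PiLp 2 (fun _ : Fin n => lp (fun _ : G => ℝ) 2) =>
      ∏' p : Fin n × G, Dm m (ξ p.1 p.2)) := by
  classical
  set C : ℝ := 2 * Real.pi ^ 2 * (m:ℝ) ^ 2 + 1 with hC
  have hCpos : (0:ℝ) < C := by positivity
  have hdiff : ∀ s t : ℝ, |Dm m s - Dm m t| ≤ C * ((|s| + |t|) * |s - t|) := by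
    intro s t
    refine (DirAux.dm_diff m s t).trans ?_
    have hnn : (0:ℝ) ≤ (|s| + |t|) * |s - t| :=
      mul_nonneg (by positivity) (abs_nonneg _)
    nlinarith
  have hone : ∀ t : ℝ, |1 - Dm m t| ≤ C * t ^ 2 := by
    intro t
    have h := hdiff 0 t
    rw [DirAux.dm_zero] at h
    refine h.trans ?_
    rw [abs_zero, zero_add, zero_sub, abs_neg]
    have : |t| * |t| = t ^ 2 := by rw [← abs_mul, abs_mul_self]; ring
    nlinarith [abs_nonneg t]
  have hmult : ∀ ξ : PiLp 2 (fun _ : Fin n => lp (fun _ : G => ℝ) 2),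
      Multipliable fun p : Fin n × G => Dm m (ξ p.1 p.2) := by
    intro ξ
    apply DirAux.multipliable_of_summable
    exact Summable.of_nonneg_of_le (fun p => abs_nonneg _) (fun p => hone _)
      ((DirAux.sq_summable ξ).mul_left C)
  rw [Metric.continuous_iff]
  intro ξ ε hε
  set Sξ : ℝ := ∑' p : Fin n × G, (ξ p.1 p.2) ^ 2 with hSξ
  have hSξ0 : 0 ≤ Sξ := tsum_nonneg fun p => sq_nonneg _
  set e : ℝ := ε / (3 * C * (Sξ + 1)) with he
  have hepos : 0 < e := by positivity
  have hA : (0:ℝ) < ε / (3 * (C * (1 + e⁻¹))) := by positivity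
  set δ : ℝ := min 1 (Real.sqrt (ε / (3 * (C * (1 + e⁻¹))))) with hδ
  have hδpos : 0 < δ := lt_min one_pos (Real.sqrt_pos.2 hA)
  refine ⟨δ, hδpos, fun η hdist => ?_⟩
  set d := η - ξ with hd
  have hdapp : ∀ p : Fin n × G, η p.1 p.2 - ξ p.1 p.2 = d p.1 p.2 := by
    intro p
    rw [hd, PiLp.sub_apply, lp.coeFn_sub, Pi.sub_apply]
  set B : Fin n × G → ℝ := fun p =>
    C * (d p.1 p.2) ^ 2 + C * (e * (ξ p.1 p.2) ^ 2 + e⁻¹ * (d p.1 p.2) ^ 2) with hB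
  have hpt : ∀ p : Fin n × G, |Dm m (η p.1 p.2) - Dm m (ξ p.1 p.2)| ≤ B p := by
    intro p
    have h1 := hdiff (η p.1 p.2) (ξ p.1 p.2)
    have h4 := DirAux.aux_ineq C e (ξ p.1 p.2) (η p.1 p.2) hCpos.le hepos
    rw [hB]
    simp only
    rw [← hdapp p]
    exact h1.trans h4
  have hsd := DirAux.sq_summable d
  have hsξ := DirAux.sq_summable ξ
  have hsumB : Summable B := by
    rw [hB]
    exact ((hsd.mul_left C).add (((hsξ.mul_left e).add (hsd.mul_left e⁻¹)).mul_left C))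
  have hsumdiff : Summable fun p : Fin n × G =>
      |Dm m (η p.1 p.2) - Dm m (ξ p.1 p.2)| :=
    Summable.of_nonneg_of_le (fun p => abs_nonneg _) hpt hsumB
  have hkey := DirAux.abs_tprod_sub_tprod_le (hmult η) (hmult ξ)
    (fun p => DirAux.dm_abs_le_one m _) (fun p => DirAux.dm_abs_le_one m _) hsumdiff
  have htsum : (∑' p : Fin n × G, |Dm m (η p.1 p.2) - Dm m (ξ p.1 p.2)|)
      ≤ ∑' p, B p := Summable.tsum_le_tsum hpt hsumdiff hsumB
  set Sd : ℝ := ∑' p : Fin n × G, (d p.1 p.2) ^ 2 with hSd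
  have hBval : ∑' p, B p = C * Sd + C * (e * Sξ + e⁻¹ * Sd) := by
    rw [hB]
    rw [Summable.tsum_add (hsd.mul_left C) (((hsξ.mul_left e).add (hsd.mul_left e⁻¹)).mul_left C),
      tsum_mul_left, tsum_mul_left, Summable.tsum_add (hsξ.mul_left e) (hsd.mul_left e⁻¹),
      tsum_mul_left, tsum_mul_left]
  have hSdval : Sd = ‖d‖ ^ 2 := DirAux.tsum_sq_eq d
  have hdn : ‖d‖ < δ := by
    rw [hd, ← dist_eq_norm]
    exact hdist
  have hSdlt : Sd < δ ^ 2 := by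
    rw [hSdval]
    nlinarith [norm_nonneg d, hδpos]
  have hδ2 : δ ^ 2 ≤ ε / (3 * (C * (1 + e⁻¹))) := by
    have h1 : δ ≤ Real.sqrt (ε / (3 * (C * (1 + e⁻¹)))) := min_le_right _ _
    have h2 : δ ^ 2 ≤ Real.sqrt (ε / (3 * (C * (1 + e⁻¹)))) ^ 2 :=
      pow_le_pow_left₀ hδpos.le h1 2
    rwa [Real.sq_sqrt hA.le] at h2
  have hSdA : Sd < ε / (3 * (C * (1 + e⁻¹))) := lt_of_lt_of_le hSdlt hδ2
  -- piece 1 : C * Sd + C * e⁻¹ * Sd < ε / 3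
  have hfac : (0:ℝ) < C * (1 + e⁻¹) := by positivity
  have hp1 : C * Sd + C * (e⁻¹ * Sd) < ε / 3 := by
    have h1 : C * Sd + C * (e⁻¹ * Sd) = C * (1 + e⁻¹) * Sd := by ring
    have h2 : C * (1 + e⁻¹) * Sd < C * (1 + e⁻¹) * (ε / (3 * (C * (1 + e⁻¹)))) :=
      (mul_lt_mul_iff_right₀ hfac).2 hSdA
    have h3 : C * (1 + e⁻¹) * (ε / (3 * (C * (1 + e⁻¹)))) = ε / 3 := by
      field_simp
    rw [h1]
    rw [h3] at h2
    exact h2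
  -- piece 2 : C * e * Sξ ≤ ε / 3
  have hp2 : C * (e * Sξ) ≤ ε / 3 := by
    rw [he]
    have hden : (0:ℝ) < 3 * C * (Sξ + 1) := by positivity
    have h1 : C * (ε / (3 * C * (Sξ + 1)) * Sξ) = ε * Sξ / (3 * (Sξ + 1)) := by
      field_simp
    rw [h1, div_le_div_iff₀ (by positivity) (by norm_num : (0:ℝ) < 3)]
    nlinarith [hε.le, hSξ0]
  -- conclude
  have hfinal : (∑' p : Fin n × G, |Dm m (η p.1 p.2) - Dm m (ξ p.1 p.2)|) < ε := by
    calc (∑' p : Fin n × G, |Dm m (η p.1 p.2) - Dm m (ξ p.1 p.2)|)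
        ≤ ∑' p, B p := htsum
      _ = C * Sd + C * (e * Sξ + e⁻¹ * Sd) := hBval
      _ = (C * Sd + C * (e⁻¹ * Sd)) + C * (e * Sξ) := by ring
      _ < ε / 3 + ε / 3 := by exact add_lt_add_of_lt_of_le hp1 hp2
      _ < ε := by linarith
  rw [Real.dist_eq]
  exact lt_of_le_of_lt hkey hfinal
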